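/- arXiv:2111.01843 — 5 statements merged into one kernel-verified Lean document; each statement's English description precedes it below -/
import Mathlib

section
/- Every uniform orchard O ⊂ ℝ^{d+1}\{0} has an empty set of visible points: for every x ∈ ℝ^{d+1}, every direction v ∈ S^d, and every ε > 0, the ray L(x,v) = {x + t·v : t ≥ 0} comes within distance ε of some point of O\{x}; equivalently dist₂(L(x,v), O\{x}) = 0. -/
noncomputable section

def FiniteDensity {d : ℕ} (S : Set (EuclideanSpace ℝ (Fin (d+1)))) : Prop :=
  ∃ C > (0:ℝ), ∀ T ≥ (1:ℝ),
    ((S ∩ Metric.closedBall 0 T).ncard : ℝ) ≤ C * T ^ (d+1)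

/-- `O` is a uniform orchard with visibility function `V`. -/
def IsUniformOrchard {d : ℕ} (O : Set (EuclideanSpace ℝ (Fin (d+1)))) (V : ℝ → ℝ) : Prop :=
  FiniteDensity O ∧
    ∀ ε ∈ Set.Ioo (0:ℝ) 1, ∀ t₀ : ℝ, ∀ v : EuclideanSpace ℝ (Fin (d+1)), ‖v‖ = 1 →
      ∃ o ∈ O, ∃ t : ℝ, t₀ < t ∧ t < t₀ + V ε ∧ ‖o - t • v‖ ≤ ε

set_option maxHeartbeats 1000000

private lemma orchard_aux {E : Type*} [NormedAddCommGroup E] [NormedSpace ℝ E]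
    (x v o w : E) (t₀ s r : ℝ) (hyw : r • w = x + t₀ • v) :
    x + (t₀ + (s - r)) • v - o = (s • w - o) + (s - r) • (v - w) := by
  calc x + (t₀ + (s - r)) • v - o = (x + t₀ • v) + (s - r) • v - o := by module
    _ = r • w + (s - r) • v - o := by rw [hyw]
    _ = (s • w - o) + (s - r) • (v - w) := by module

/-- A uniform orchard has an empty set of visible points: every ray comes
arbitrarily close to the set (minus the base point of the ray). -/
theorem uniformOrchard_no_visible_points (d : ℕ)
    (O : Set (EuclideanSpace ℝ (Fin (d+1)))) (h0 : (0:EuclideanSpace ℝ (Fin (d+1))) ∉ O)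
    (V : ℝ → ℝ) (hVpos : ∀ ε ∈ Set.Ioo (0:ℝ) 1, 0 < V ε)
    (hV : AntitoneOn V (Set.Ioo (0:ℝ) 1))
    (hO : IsUniformOrchard O V) :
    ∀ x : EuclideanSpace ℝ (Fin (d+1)), ∀ v : EuclideanSpace ℝ (Fin (d+1)), ‖v‖ = 1 →
      ∀ ε > (0:ℝ), ∃ o ∈ O, o ≠ x ∧ ∃ t : ℝ, 0 ≤ t ∧ ‖x + t • v - o‖ ≤ ε := by
  obtain ⟨-, horch⟩ := hO
  intro x v hv ε hε
  set ε' : ℝ := min ε 1 / 2 with hε'def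
  clear_value ε'
  have hε'mem : ε' ∈ Set.Ioo (0:ℝ) 1 := by
    constructor
    · have : (0:ℝ) < min ε 1 := lt_min hε one_pos
      linarith
    · have : min ε 1 ≤ 1 := min_le_right _ _
      linarith
  have hε'le : ε' ≤ ε / 2 := by
    have : min ε 1 ≤ ε := min_le_left _ _
    simp only [hε'def]; linarith
  set K := V ε' with hKdef
  clear_value K
  have hK : 0 < K := by rw [hKdef]; exact hVpos ε' hε'mem
  set t₀ : ℝ := 2*‖x‖ + 2 + 4*K*(‖x‖+1)/ε with ht₀def
  clear_value t₀
  have hxn : (0:ℝ) ≤ ‖x‖ := norm_nonneg x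
  have ht₀pos : 0 < t₀ := by rw [ht₀def]; positivity
  set y := x + t₀ • v with hydef
  clear_value y
  have htv : ‖t₀ • v‖ = t₀ := by
    rw [norm_smul, hv, mul_one, Real.norm_eq_abs, abs_of_pos ht₀pos]
  have hylb : t₀ - ‖x‖ ≤ ‖y‖ := by
    have h2 : ‖t₀ • v‖ ≤ ‖y‖ + ‖x‖ := by
      have : t₀ • v = y - x := by rw [hydef]; abel
      rw [this]; exact norm_sub_le y x
    linarith
  have hyub : ‖y‖ ≤ t₀ + ‖x‖ := by
    have := norm_add_le x (t₀ • v)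
    rw [htv] at this; rw [hydef]; linarith
  have hylb2 : ‖x‖ + 2 + 4*K*(‖x‖+1)/ε ≤ ‖y‖ := by
    rw [ht₀def] at hylb; linarith
  have hypos : (0:ℝ) < ‖y‖ := by
    have : 4*K*(‖x‖+1)/ε ≥ 0 := by positivity
    linarith
  set w := ‖y‖⁻¹ • y with hwdef
  clear_value w
  have hw : ‖w‖ = 1 := by
    rw [hwdef, norm_smul, Real.norm_eq_abs, abs_of_pos (inv_pos.mpr hypos)]
    field_simp
  have hyw : ‖y‖ • w = x + t₀ • v := by
    rw [hwdef, smul_smul, mul_inv_cancel₀ (ne_of_gt hypos), one_smul, hydef]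
  -- bound on ‖v - w‖
  have hvw : ‖v - w‖ ≤ 2*‖x‖/‖y‖ := by
    have h1 : ‖y‖ • (v - w) = (‖y‖ - t₀) • v - x := by
      rw [smul_sub, hyw]; module
    have h2 : ‖(‖y‖ - t₀) • v - x‖ ≤ 2*‖x‖ := by
      have := norm_sub_le ((‖y‖ - t₀) • v) x
      have h3 : ‖(‖y‖ - t₀) • v‖ ≤ ‖x‖ := by
        rw [norm_smul, hv, mul_one, Real.norm_eq_abs, abs_le]
        constructor <;> linarith
      linarith
    have h4 : ‖‖y‖ • (v - w)‖ = ‖y‖ * ‖v - w‖ := by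
      rw [norm_smul, Real.norm_eq_abs, abs_of_pos hypos]
    rw [h1] at h4
    rw [le_div_iff₀ hypos]
    nlinarith [h2, h4]
  obtain ⟨o, ho, s, hs1, hs2, hso⟩ := horch ε' hε'mem ‖y‖ w hw
  set t : ℝ := t₀ + (s - ‖y‖) with htdef
  clear_value t
  have ht : 0 ≤ t := by
    simp only [htdef]; linarith
  have key : x + t • v - o = (s • w - o) + (s - ‖y‖) • (v - w) := by
    rw [htdef]; exact orchard_aux x v o w t₀ s ‖y‖ hyw
  have hεy : 4*K*(‖x‖+1) ≤ ε * ‖y‖ := by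
    have h5 : ε * (‖x‖ + 2 + 4*K*(‖x‖+1)/ε) ≤ ε * ‖y‖ :=
      mul_le_mul_of_nonneg_left hylb2 (le_of_lt hε)
    have h6 : ε * (4*K*(‖x‖+1)/ε) = 4*K*(‖x‖+1) := by field_simp
    nlinarith [hε, hxn]
  have hbound : ‖x + t • v - o‖ ≤ ε := by
    rw [key]
    have h7 : ‖(s - ‖y‖) • (v - w)‖ ≤ K * (2*‖x‖/‖y‖) := by
      rw [norm_smul, Real.norm_eq_abs, abs_of_pos (by linarith : (0:ℝ) < s - ‖y‖)]
      exact mul_le_mul (by linarith) hvw (norm_nonneg _) (le_of_lt hK)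
    have h8 : K * (2*‖x‖/‖y‖) ≤ ε / 2 := by
      rw [mul_div_assoc' K _ _, div_le_iff₀ hypos]
      nlinarith [hK.le, hxn]
    have h9 : ‖s • w - o‖ ≤ ε' := by rw [norm_sub_rev]; exact hso
    calc ‖(s • w - o) + (s - ‖y‖) • (v - w)‖
        ≤ ‖s • w - o‖ + ‖(s - ‖y‖) • (v - w)‖ := norm_add_le _ _
      _ ≤ ε' + ε / 2 := add_le_add h9 (h7.trans h8)
      _ ≤ ε := by linarith
  have hne : o ≠ x := by
    have hso' : ‖s • w‖ - ‖o‖ ≤ ε' := by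
      have := norm_sub_norm_le (s • w) o
      rw [norm_sub_rev] at hso; linarith
    have hsw : ‖s • w‖ = s := by
      rw [norm_smul, hw, mul_one, Real.norm_eq_abs, abs_of_pos (by linarith : (0:ℝ) < s)]
    have hyge : ‖x‖ + 2 ≤ ‖y‖ := by
      have : 4*K*(‖x‖+1)/ε ≥ 0 := by positivity
      linarith
    have hogt : ‖x‖ < ‖o‖ := by
      rw [hsw] at hso'
      have : ε' < 1 := hε'mem.2
      linarith
    intro h
    rw [h] at hogt
    exact lt_irrefl _ hogt
  exact ⟨o, ho, hne, t, ht, hbound⟩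
end
end

section
/- Let Λ = { √n · e^{2πi p/k} : n ≥ 1 } ⊂ ℂ ≅ ℝ², where for each n ≥ 1 the integers k ≥ 1 and 0 ≤ p ≤ k are determined by the unique decomposition n = k(k+1)/2 + p. Then Λ is an orchard with visibility function V(ε) ≤ C·ε^{−1} for some constant C > 0: for every ε ∈ (0,1) and every θ ∈ [0,1] there exist a point z ∈ Λ and 0 < t < C·ε^{−1} with |z − t·e^{2πiθ}| ≤ ε. -/
set_option maxHeartbeats 800000


noncomputable section

open Complex Real

/-- The planar spiral `Λ = { √n · e^{2πi p/k} }` where `n = k(k+1)/2 + p`,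
`k ≥ 1`, `0 ≤ p ≤ k`. -/
def Lam : Set ℂ :=
  {z | ∃ n k p : ℕ, 1 ≤ n ∧ 1 ≤ k ∧ p ≤ k ∧ n = k * (k+1) / 2 + p ∧
    z = (Real.sqrt n : ℂ) * Complex.exp (2 * Real.pi * Complex.I * ((p : ℂ) / (k : ℂ)))}

theorem Lam_orchard_visibility :
    ∃ C > (0:ℝ), ∀ ε ∈ Set.Ioo (0:ℝ) 1, ∀ θ ∈ Set.Icc (0:ℝ) 1,
      ∃ z ∈ Lam, ∃ t : ℝ, 0 < t ∧ t < C / ε ∧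
        ‖z - (t : ℂ) * Complex.exp (2 * Real.pi * Complex.I * (θ : ℂ))‖ ≤ ε := by
  refine ⟨30, by norm_num, ?_⟩
  rintro ε ⟨hε0, hε1⟩ θ ⟨hθ0, hθ1⟩
  set N : ℕ := ⌈(18:ℝ)/ε⌉₊ with hNdef
  have hNge : (18:ℝ)/ε ≤ N := Nat.le_ceil _
  have hNpos : 0 < N := Nat.ceil_pos.mpr (by positivity)
  obtain ⟨j, k, hk0, hkN, hjk⟩ := Real.exists_int_int_abs_mul_sub_le θ hNpos
  have hNR : (0:ℝ) < (N:ℝ) + 1 := by positivity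
  have h1N : (1:ℝ)/(N+1) ≤ ε/18 := by
    rw [div_le_div_iff₀ hNR (by norm_num)]
    have : (18:ℝ) ≤ ε * N := by
      rw [div_le_iff₀ hε0] at hNge
      nlinarith
    nlinarith
  have hkR : (0:ℝ) < (k:ℝ) := by exact_mod_cast hk0
  have hj0 : 0 ≤ j := by
    by_contra h
    push_neg at h
    have hj' : j ≤ -1 := by omega
    have hj : (j:ℝ) ≤ -1 := by exact_mod_cast hj'
    have : (k:ℝ) * θ - j ≥ 1 := by nlinarith
    have h2 : (1:ℝ)/(N+1) ≤ 1 := by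
      rw [div_le_one hNR]
      have : (1:ℝ) ≤ N := by exact_mod_cast hNpos
      linarith
    have := abs_le.mp hjk
    -- |kθ - j| ≤ 1/(N+1) ≤ 1 but kθ - j ≥ 1... need strict
    have hstr : (1:ℝ)/(N+1) < 1 := by
      rw [div_lt_one hNR]
      have : (1:ℝ) ≤ N := by exact_mod_cast hNpos
      linarith
    linarith [this.2]
  have hjle : j ≤ k := by
    by_contra h
    push_neg at h
    have hj : (k:ℝ) + 1 ≤ (j:ℝ) := by exact_mod_cast Int.lt_iff_add_one_le.mp h
    have := (abs_le.mp hjk).1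
    have hstr : (1:ℝ)/(N+1) < 1 := by
      rw [div_lt_one hNR]
      have : (1:ℝ) ≤ N := by exact_mod_cast hNpos
      linarith
    nlinarith
  set K : ℕ := k.toNat with hKdef
  set p : ℕ := j.toNat with hpdef
  have hKpos : 1 ≤ K := by omega
  have hpK : p ≤ K := by omega
  have hKZ : (K:ℤ) = k := Int.toNat_of_nonneg hk0.le
  have hpZ : (p:ℤ) = j := Int.toNat_of_nonneg hj0
  have hKcast : (K:ℝ) = (k:ℝ) := by exact_mod_cast congrArg (Int.cast : ℤ → ℝ) hKZ
  have hpcast : (p:ℝ) = (j:ℝ) := by exact_mod_cast congrArg (Int.cast : ℤ → ℝ) hpZ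
  set n : ℕ := K * (K+1) / 2 + p with hndef
  have hn1 : 1 ≤ n := by
    have : 1 ≤ K * (K+1) / 2 := by
      have : 2 ≤ K * (K+1) := by nlinarith
      omega
    omega
  have hn2 : (n:ℝ) ≤ 2 * K^2 := by
    have h1 : K * (K+1) / 2 + p ≤ 2 * K^2 := by
      have : K * (K+1) / 2 ≤ K * K := by
        have := Nat.div_le_of_le_mul (m := K*(K+1)) (n := K*K) (k := 2) (by nlinarith)
        omega
      nlinarith
    exact_mod_cast h1
  have hsqrt2 : Real.sqrt 2 < 1.415 := by
    rw [show (1.415:ℝ) = Real.sqrt (1.415^2) by rw [Real.sqrt_sq]; norm_num]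
    exact Real.sqrt_lt_sqrt (by norm_num) (by norm_num)
  have hsn : Real.sqrt n ≤ Real.sqrt 2 * K := by
    calc Real.sqrt n ≤ Real.sqrt (2 * K^2) := Real.sqrt_le_sqrt hn2
    _ = Real.sqrt 2 * K := by
        rw [Real.sqrt_mul (by norm_num), Real.sqrt_sq (by positivity)]
  have hsnpos : 0 < Real.sqrt n := Real.sqrt_pos.mpr (by exact_mod_cast hn1)
  set t : ℝ := Real.sqrt n with htdef
  refine ⟨(Real.sqrt n : ℂ) * Complex.exp (2 * Real.pi * Complex.I * ((p : ℂ) / (K : ℂ))),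
    ⟨n, K, p, hn1, hKpos, hpK, rfl, rfl⟩, t, hsnpos, ?_, ?_⟩
  · -- t < 30/ε
    have hKN : (K:ℝ) ≤ N := by
      have : (k:ℝ) ≤ N := by exact_mod_cast hkN
      linarith [hKcast ▸ this]
    have hNle : (N:ℝ) ≤ 18/ε + 1 := by
      have h := Nat.ceil_lt_add_one (a := (18:ℝ)/ε) (by positivity)
      rw [hNdef]
      linarith
    have h19 : (N:ℝ) ≤ 19/ε := by
      have h1e : 1 ≤ 1/ε := by rw [le_div_iff₀ hε0]; linarith
      have : 18/ε + 1 ≤ 19/ε := by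
        rw [div_add' _ _ _ (ne_of_gt hε0), div_le_div_iff₀ hε0 hε0]
        nlinarith
      linarith
    calc t ≤ Real.sqrt 2 * K := hsn
    _ ≤ 1.415 * (19/ε) := by
        apply mul_le_mul (le_of_lt hsqrt2) (hKN.trans h19) (by positivity) (by norm_num)
    _ = 26.885/ε := by ring
    _ < 30/ε := by
        rw [div_lt_div_iff₀ hε0 hε0]
        nlinarith
  · -- distance bound
    set d : ℝ := (p:ℝ)/(K:ℝ) - θ with hddef
    have hKRpos : (0:ℝ) < K := by exact_mod_cast hKpos
    have hK1 : (1:ℝ) ≤ (K:ℝ) := by exact_mod_cast hKpos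
    have hd : |d| ≤ 1/((K:ℝ)*(N+1)) := by
      have h1 : |(K:ℝ) * d| ≤ 1/(N+1) := by
        have : (K:ℝ) * d = -((k:ℝ) * θ - j) := by
          rw [hddef, hKcast]
          field_simp
          rw [hpcast]
          ring
        rw [this, abs_neg]; exact hjk
      rw [abs_mul, abs_of_pos hKRpos] at h1
      rw [le_div_iff₀ (by positivity)]
      calc |d| * ((K:ℝ)*(N+1)) = ((K:ℝ) * |d|) * (N+1) := by ring
      _ ≤ (1/(N+1)) * (N+1) := by
          apply mul_le_mul_of_nonneg_right h1 (by positivity)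
      _ = 1 := by field_simp
    have hπ : Real.pi < 3.15 := Real.pi_lt_d2
    have hπ0 : 0 < Real.pi := Real.pi_pos
    -- rewrite the difference
    have key : (Real.sqrt n : ℂ) * Complex.exp (2 * Real.pi * Complex.I * ((p : ℂ) / (K : ℂ)))
        - (t : ℂ) * Complex.exp (2 * Real.pi * Complex.I * (θ : ℂ))
        = (Real.sqrt n : ℂ) * Complex.exp (2 * Real.pi * Complex.I * (θ : ℂ))
          * (Complex.exp (2 * Real.pi * Complex.I * (d : ℂ)) - 1) := by
      have harg : (2:ℂ) * Real.pi * Complex.I * ((p : ℂ) / (K : ℂ))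
          = 2 * Real.pi * Complex.I * (θ : ℂ) + 2 * Real.pi * Complex.I * (d : ℂ) := by
        have hdC : (d:ℂ) = (p : ℂ) / (K : ℂ) - (θ:ℂ) := by push_cast [hddef]; ring
        rw [hdC]; ring
      rw [harg, Complex.exp_add]
      ring
    rw [key, norm_mul, norm_mul]
    have habs1 : ‖Complex.exp (2 * Real.pi * Complex.I * (θ : ℂ))‖ = 1 := by
      have : (2:ℂ) * Real.pi * Complex.I * (θ : ℂ) = ((2*Real.pi*θ : ℝ):ℂ) * Complex.I := by
        push_cast; ring
      rw [this, Complex.norm_exp_ofReal_mul_I]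
    rw [habs1, mul_one]
    have habsn : ‖((Real.sqrt n : ℂ))‖ = Real.sqrt n := by
      rw [Complex.norm_real, Real.norm_of_nonneg hsnpos.le]
    rw [habsn]
    have habsd : ‖(2 * Real.pi * Complex.I * (d : ℂ))‖ = 2 * Real.pi * |d| := by
      have : (2:ℂ) * Real.pi * Complex.I * (d : ℂ) = ((2*Real.pi*d : ℝ):ℂ) * Complex.I := by
        push_cast; ring
      rw [this, norm_mul, Complex.norm_I, mul_one, Complex.norm_real, Real.norm_eq_abs, abs_mul,
        abs_of_pos (by positivity : (0:ℝ) < 2*Real.pi)]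
    have hdsmall : |d| ≤ ε/(18 * K) := by
      calc |d| ≤ 1/((K:ℝ)*(N+1)) := hd
      _ ≤ ε/(18*K) := by
          rw [div_le_div_iff₀ (by positivity) (by positivity)]
          calc 1 * (18 * (K:ℝ)) = (K:ℝ) * (18 * (1/(N+1))) * (N+1) := by field_simp
          _ ≤ (K:ℝ) * (18 * (ε/18)) * (N+1) := by
              apply mul_le_mul_of_nonneg_right _ (by positivity)
              apply mul_le_mul_of_nonneg_left _ (by positivity)
              linarith
          _ = ε * ((K:ℝ)*(N+1)) := by ring
    have hsmall : ‖(2 * Real.pi * Complex.I * (d : ℂ))‖ ≤ 1 := by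
      rw [habsd]
      have : |d| ≤ ε/18 := by
        calc |d| ≤ ε/(18*K) := hdsmall
        _ ≤ ε/18 := by
            apply div_le_div_of_nonneg_left (le_of_lt hε0) (by norm_num)
            nlinarith [hK1]
      nlinarith
    have hexp := Complex.norm_exp_sub_one_le hsmall
    calc Real.sqrt n * ‖Complex.exp (2 * Real.pi * Complex.I * (d : ℂ)) - 1‖
        ≤ Real.sqrt n * (2 * ‖(2 * Real.pi * Complex.I * (d : ℂ))‖) := by
          apply mul_le_mul_of_nonneg_left hexp (le_of_lt hsnpos)
    _ = Real.sqrt n * (4 * Real.pi * |d|) := by rw [habsd]; ring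
    _ ≤ (Real.sqrt 2 * K) * (4 * Real.pi * (ε/(18*K))) := by
        apply mul_le_mul hsn _ (by positivity) (by positivity)
        apply mul_le_mul_of_nonneg_left hdsmall (by positivity)
    _ = Real.sqrt 2 * Real.pi * (4/18) * ε := by field_simp
    _ ≤ ε := by
        have h2 : Real.sqrt 2 * Real.pi ≤ 1.415 * 3.15 := by
          nlinarith [Real.sqrt_nonneg 2]
        nlinarith
end
end

section
/- The planar spiral Λ = { √n·(cos(2πp/k), sin(2πp/k)) : n ≥ 1 } (with n = k(k+1)/2 + p, k ≥ 1, 0 ≤ p ≤ k) has a non-empty set of visible points: there exists δ > 0 such that no point of Λ has second coordinate in the open interval (0, δ); consequently any point (x, δ/2) is visible in the horizontal direction (1,0). -/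
noncomputable section

open Complex Real

lemma Lam_im_cases (z : ℂ) (hz : z ∈ Lam) : z.im ≤ 0 ∨ 1 ≤ z.im := by
  obtain ⟨n, k, p, hn, hk, hpk, hnkp, hz⟩ := hz
  have hk0 : (0:ℝ) < (k:ℝ) := by exact_mod_cast hk
  have him : z.im = Real.sqrt n * Real.sin (2 * π * ((p:ℝ) / (k:ℝ))) := by
    have harg : (2 * (π:ℂ) * Complex.I * ((p : ℂ) / (k : ℂ)))
        = ((2 * π * ((p:ℝ) / (k:ℝ)) : ℝ) : ℂ) * Complex.I := by
      push_cast; ring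
    rw [hz, harg, Complex.mul_im, Complex.ofReal_re, Complex.ofReal_im,
      Complex.exp_ofReal_mul_I_im, Complex.exp_ofReal_mul_I_re]
    ring
  rcases le_or_gt k (2 * p) with h2p | h2p
  · -- the angle is in [π, 2π], sine is nonpositive
    left
    rw [him]
    have hple : (p:ℝ) / (k:ℝ) ≤ 1 := by
      rw [div_le_one hk0]; exact_mod_cast hpk
    have hpge : (1:ℝ) / 2 ≤ (p:ℝ) / (k:ℝ) := by
      rw [div_le_div_iff₀ (by norm_num) hk0]
      have : (k:ℝ) ≤ 2 * (p:ℝ) := by exact_mod_cast h2p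
      linarith
    have hs : Real.sin (2 * π * ((p:ℝ) / (k:ℝ))) ≤ 0 := by
      have := Real.sin_nonpos_of_nonpos_of_neg_pi_le
        (x := 2 * π * ((p:ℝ) / (k:ℝ)) - 2 * π)
        (by nlinarith [Real.pi_pos]) (by nlinarith [Real.pi_pos])
      rwa [Real.sin_sub_two_pi] at this
    exact mul_nonpos_of_nonneg_of_nonpos (Real.sqrt_nonneg _) hs
  · rcases Nat.eq_zero_or_pos p with hp0 | hp1
    · left
      rw [him, hp0]
      simp
    · -- 1 ≤ p, 2p < k : sine is at least 2/k and √n ≥ k/√2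
      right
      rw [him]
      have hp1' : (1:ℝ) ≤ (p:ℝ) := by exact_mod_cast hp1
      have h2p' : 2 * (p:ℝ) + 1 ≤ (k:ℝ) := by exact_mod_cast h2p
      have hs : 2 / (k:ℝ) ≤ Real.sin (2 * π * ((p:ℝ) / (k:ℝ))) := by
        set x : ℝ := (p:ℝ) / (k:ℝ) with hx
        have hx0 : 0 < x := by positivity
        have hxhalf : x < 1 / 2 := by
          rw [hx, div_lt_div_iff₀ hk0 (by norm_num)]; nlinarith
        rcases le_or_gt (2 * π * x) (π / 2) with hc | hc
        · have := Real.mul_le_sin (x := 2 * π * x)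
            (by positivity) hc
          have hx' : 1 / (k:ℝ) ≤ x := by
            rw [hx, div_le_div_iff₀ hk0 hk0]; nlinarith
          have hxk : x * (k:ℝ) = (p:ℝ) := by rw [hx]; field_simp
          calc 2 / (k:ℝ) ≤ 4 * x := by
                rw [div_le_iff₀ hk0]; nlinarith
            _ = 2 / π * (2 * π * x) := by
                field_simp
                ring
            _ ≤ _ := this
        · -- use sin(θ) = sin(π - θ)
          have hθ : Real.sin (2 * π * x) = Real.sin (π - 2 * π * x) := by
            rw [Real.sin_pi_sub]
          have h1 : 0 ≤ π - 2 * π * x := by nlinarith [Real.pi_pos]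
          have h2 : π - 2 * π * x ≤ π / 2 := by nlinarith [Real.pi_pos]
          have := Real.mul_le_sin (x := π - 2 * π * x) h1 h2
          rw [hθ]
          refine le_trans ?_ this
          have hxk : x * (k:ℝ) = (p:ℝ) := by rw [hx]; field_simp
          have hgap : 1 / (k:ℝ) ≤ 1 - 2 * x := by
            rw [div_le_iff₀ hk0]
            nlinarith
          have hπ := Real.pi_pos
          calc 2 / (k:ℝ) = 2 * (1 / (k:ℝ)) := by ring
            _ ≤ 2 * (1 - 2 * x) := by nlinarith
            _ = 2 / π * (π - 2 * π * x) := by field_simp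
      have hnk : (k:ℝ)^2 / 2 ≤ (n:ℝ) := by
        have hd : (k * (k+1) / 2) * 2 = k * (k+1) :=
          Nat.div_mul_cancel (Nat.even_mul_succ_self k).two_dvd
        have hd' : ((k * (k+1) / 2 : ℕ) : ℝ) = (k:ℝ) * ((k:ℝ)+1) / 2 := by
          rw [eq_div_iff (by norm_num : (2:ℝ) ≠ 0)]
          exact_mod_cast congrArg (Nat.cast : ℕ → ℝ) hd
        have hp0 : (0:ℝ) ≤ (p:ℝ) := Nat.cast_nonneg p
        have : (n:ℝ) = (k:ℝ) * ((k:ℝ)+1) / 2 + (p:ℝ) := by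
          rw [hnkp]; push_cast [hd']; ring
        nlinarith
      have hsqrt : (k:ℝ) / Real.sqrt 2 ≤ Real.sqrt n := by
        have h2 : Real.sqrt ((k:ℝ)^2 / 2) = (k:ℝ) / Real.sqrt 2 := by
          rw [Real.sqrt_div (by positivity) 2, Real.sqrt_sq hk0.le]
        rw [← h2]
        exact Real.sqrt_le_sqrt hnk
      have hs2 : (0:ℝ) < Real.sqrt 2 := by positivity
      have hss : Real.sqrt 2 * Real.sqrt 2 = 2 := Real.mul_self_sqrt (by norm_num)
      have key : Real.sqrt 2 ≤ Real.sqrt n * Real.sin (2 * π * ((p:ℝ) / (k:ℝ))) := by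
        have h1 : (k:ℝ) / Real.sqrt 2 * (2 / (k:ℝ)) = Real.sqrt 2 := by
          rw [div_mul_div_comm, eq_comm, eq_div_iff (by positivity)]
          linear_combination (k:ℝ) * hss
        calc Real.sqrt 2 = (k:ℝ) / Real.sqrt 2 * (2 / (k:ℝ)) := h1.symm
          _ ≤ Real.sqrt n * Real.sin (2 * π * ((p:ℝ) / (k:ℝ))) := by
              apply mul_le_mul hsqrt hs (by positivity)
              exact Real.sqrt_nonneg _
      have : (1:ℝ) ≤ Real.sqrt 2 := by
        rw [show (1:ℝ) = Real.sqrt 1 by simp]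
        exact Real.sqrt_le_sqrt (by norm_num)
      linarith

/-- The spiral `Λ` has a non-empty set of visible points: there is a vacant
horizontal strip `0 < y < δ`, and consequently every point `(x, δ/2)` is
visible in the horizontal direction `(1,0)`. -/
theorem Lam_has_visible_points :
    ∃ δ > (0:ℝ), (∀ z ∈ Lam, ¬ (0 < z.im ∧ z.im < δ)) ∧
      ∀ x : ℝ, ∃ r > (0:ℝ), ∀ t : ℝ, 0 ≤ t → ∀ z ∈ Lam,
        z ≠ Complex.mk x (δ/2) →
          r ≤ ‖Complex.mk x (δ/2) + (t:ℂ) - z‖ := by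
  refine ⟨1, one_pos, ?_, ?_⟩
  · intro z hz h
    obtain ⟨h1, h2⟩ := h
    rcases Lam_im_cases z hz with h' | h' <;> linarith
  · intro x
    refine ⟨1/2, by norm_num, ?_⟩
    intro t ht z hz hne
    have him : (Complex.mk x (1/2) + (t:ℂ) - z).im = 1/2 - z.im := by
      simp [Complex.sub_im, Complex.add_im, Complex.ofReal_im]
    have habs := Complex.abs_im_le_norm (Complex.mk x (1/2) + (t:ℂ) - z)
    rw [him] at habs
    rcases Lam_im_cases z hz with h | h
    · refine le_trans ?_ habs
      rw [_root_.abs_of_nonneg (by linarith)]; linarith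
    · refine le_trans ?_ habs
      rw [_root_.abs_of_nonpos (by linarith)]; linarith
end
end

section
/- Let f: ℝ₊ → ℝ₊ be increasing and suppose the point set {f(n)·u_n : n ≥ 1} ⊂ ℝ^{d+1} (with u_n ∈ S^d) is uniformly discrete (the infimum of pairwise distances between distinct points is positive). Then liminf_{n→∞} f(n)/n^{1/(d+1)} > 0. -/
noncomputable section

open Filter Metric MeasureTheory

lemma packing_count (d : ℕ) (r R : ℝ) (hr : 0 < r) (s : Finset ℕ)
    (p : ℕ → EuclideanSpace ℝ (Fin (d+1)))
    (hR : 0 ≤ R) (hp : ∀ i ∈ s, ‖p i‖ ≤ R)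
    (hsep : ∀ i ∈ s, ∀ j ∈ s, i ≠ j → r ≤ ‖p i - p j‖) :
    (s.card : ℝ) * (r/2)^(d+1) ≤ (R + r/2)^(d+1) := by
  set μ := (volume : Measure (EuclideanSpace ℝ (Fin (d+1))))
  have hdisj : (s : Set ℕ).PairwiseDisjoint (fun i => ball (p i) (r/2)) := by
    intro i hi j hj hij
    apply ball_disjoint_ball
    rw [dist_eq_norm]
    linarith [hsep i hi j hj hij]
  have hsub : (⋃ i ∈ s, ball (p i) (r/2)) ⊆ ball (0 : EuclideanSpace ℝ (Fin (d+1))) (R + r/2) := by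
    intro x hx
    simp only [Set.mem_iUnion] at hx
    obtain ⟨i, hi, hx⟩ := hx
    rw [mem_ball] at hx ⊢
    have := hp i hi
    calc dist x 0 ≤ dist x (p i) + dist (p i) 0 := dist_triangle _ _ _
      _ < r/2 + R := by rw [dist_zero_right]; linarith
      _ = R + r/2 := by ring
  have hμeq : μ (⋃ i ∈ s, ball (p i) (r/2)) = ∑ i ∈ s, μ (ball (p i) (r/2)) :=
    measure_biUnion_finset hdisj (fun i _ => measurableSet_ball)
  have hball : ∀ x : EuclideanSpace ℝ (Fin (d+1)), ∀ ρ : ℝ, 0 ≤ ρ →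
      μ (ball x ρ) = ENNReal.ofReal (ρ ^ (d+1)) * μ (ball 0 1) := by
    intro x ρ hρ
    rw [Measure.addHaar_ball μ x hρ, finrank_euclideanSpace_fin]
  have key : (s.card : ENNReal) * (ENNReal.ofReal ((r/2) ^ (d+1)) * μ (ball 0 1))
      ≤ ENNReal.ofReal ((R + r/2) ^ (d+1)) * μ (ball 0 1) := by
    calc (s.card : ENNReal) * (ENNReal.ofReal ((r/2) ^ (d+1)) * μ (ball 0 1))
        = ∑ i ∈ s, μ (ball (p i) (r/2)) := by
          rw [Finset.sum_congr rfl (fun i _ => hball (p i) (r/2) (by positivity))]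
          rw [Finset.sum_const, nsmul_eq_mul]
      _ = μ (⋃ i ∈ s, ball (p i) (r/2)) := hμeq.symm
      _ ≤ μ (ball 0 (R + r/2)) := measure_mono hsub
      _ = ENNReal.ofReal ((R + r/2) ^ (d+1)) * μ (ball 0 1) := hball _ _ (by positivity)
  have hB0 : μ (ball (0 : EuclideanSpace ℝ (Fin (d+1))) 1) ≠ 0 :=
    (measure_ball_pos μ _ one_pos).ne'
  have hBt : μ (ball (0 : EuclideanSpace ℝ (Fin (d+1))) 1) ≠ ⊤ :=
    measure_ball_lt_top.ne
  rw [← mul_assoc] at key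
  have key2 : (s.card : ENNReal) * ENNReal.ofReal ((r/2) ^ (d+1))
      ≤ ENNReal.ofReal ((R + r/2) ^ (d+1)) :=
    (ENNReal.mul_le_mul_iff_left hB0 hBt).mp key
  have : ENNReal.ofReal ((s.card : ℝ) * (r/2) ^ (d+1)) ≤ ENNReal.ofReal ((R + r/2) ^ (d+1)) := by
    rw [ENNReal.ofReal_mul (by positivity), ENNReal.ofReal_natCast]
    exact key2
  exact (ENNReal.ofReal_le_ofReal_iff (by positivity)).mp this

theorem uniformly_discrete_liminf_positive (d : ℕ)
    (u : ℕ → EuclideanSpace ℝ (Fin (d+1))) (hu : ∀ n, ‖u n‖ = 1)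
    (f : ℝ → ℝ) (hf0 : ∀ x ≥ (0:ℝ), 0 ≤ f x) (hf : MonotoneOn f (Set.Ici 0))
    (hdisc : ∃ r > (0:ℝ), ∀ m n : ℕ, 1 ≤ m → 1 ≤ n → m ≠ n →
      r ≤ ‖f m • u m - f n • u n‖) :
    ∃ c > (0:ℝ), ∀ᶠ n : ℕ in atTop,
      c ≤ f n / (n : ℝ) ^ ((1:ℝ)/((d:ℝ)+1)) := by
  obtain ⟨r, hr, hsep⟩ := hdisc
  set α : ℝ := (1:ℝ)/((d:ℝ)+1) with hα
  have hαpos : 0 < α := by positivity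
  -- key pointwise bound: for n ≥ 1, (n:ℝ)^α * (r/2) ≤ f n + r/2
  have hkey : ∀ n : ℕ, 1 ≤ n → ((n:ℝ)) ^ α * (r/2) ≤ f n + r/2 := by
    intro n hn
    have hfn : 0 ≤ f n := hf0 _ (by positivity)
    have hcount : ((Finset.Icc 1 n).card : ℝ) * (r/2)^(d+1) ≤ (f n + r/2)^(d+1) := by
      apply packing_count d r (f n) hr _ (fun m : ℕ => f (m:ℝ) • u m) hfn
      · intro i hi
        simp only [Finset.mem_Icc] at hi
        rw [norm_smul, hu, mul_one, Real.norm_eq_abs,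
          abs_of_nonneg (hf0 _ (by positivity))]
        exact hf (Set.mem_Ici.mpr (by positivity)) (Set.mem_Ici.mpr (by positivity)) (by exact_mod_cast hi.2)
      · intro i hi j hj hij
        simp only [Finset.mem_Icc] at hi hj
        exact hsep i j hi.1 hj.1 hij
    rw [Nat.card_Icc] at hcount
    simp only [Nat.add_sub_cancel] at hcount
    have h1 : ((n:ℝ) * (r/2)^(d+1)) ^ α ≤ ((f n + r/2)^(d+1)) ^ α :=
      Real.rpow_le_rpow (by positivity) hcount hαpos.le
    have h2 : ((f n + r/2)^(d+1) : ℝ) ^ α = f n + r/2 := by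
      rw [← Real.rpow_natCast (f n + r/2) (d+1), ← Real.rpow_mul (by positivity)]
      have : ((d:ℝ)+1) * α = 1 := by
        rw [hα]; field_simp
      push_cast
      rw [this, Real.rpow_one]
    have h3 : ((n:ℝ) * (r/2)^(d+1)) ^ α = (n:ℝ)^α * (r/2) := by
      rw [Real.mul_rpow (by positivity) (by positivity),
        ← Real.rpow_natCast (r/2) (d+1), ← Real.rpow_mul (by positivity)]
      have : ((d:ℝ)+1) * α = 1 := by rw [hα]; field_simp
      push_cast
      rw [this, Real.rpow_one]
    rw [h3] at h1
    rw [h2] at h1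
    exact h1
  refine ⟨r/4, by positivity, ?_⟩
  have htend : Tendsto (fun n : ℕ => ((n:ℝ)) ^ α) atTop atTop :=
    (tendsto_rpow_atTop hαpos).comp tendsto_natCast_atTop_atTop
  filter_upwards [htend.eventually_ge_atTop 2, eventually_ge_atTop 1] with n h2n h1n
  have hnpos : (0:ℝ) < (n:ℝ)^α := lt_of_lt_of_le two_pos h2n
  rw [le_div_iff₀ hnpos]
  have := hkey n h1n
  nlinarith [h2n, this, hr]
end
end

section
/- Let f: ℝ₊ → ℝ₊ be increasing and suppose {f(n)·u_n : n ≥ 1} ⊂ ℝ^{d+1} (with u_n ∈ S^d) is relatively dense (there is R > 0 such that every point of ℝ^{d+1} is within distance R of the set). Then limsup_{n→∞} f(n)/n^{1/(d+1)} < ∞. -/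
noncomputable section

open Filter

theorem relatively_dense_limsup_finite (d : ℕ)
    (u : ℕ → EuclideanSpace ℝ (Fin (d+1))) (hu : ∀ n, ‖u n‖ = 1)
    (f : ℝ → ℝ) (hf0 : ∀ x ≥ (0:ℝ), 0 ≤ f x) (hf : MonotoneOn f (Set.Ici 0))
    (hdense : ∃ R > (0:ℝ), ∀ x : EuclideanSpace ℝ (Fin (d+1)),
      ∃ n : ℕ, 1 ≤ n ∧ ‖x - f n • u n‖ ≤ R) :
    ∃ C : ℝ, ∀ᶠ n : ℕ in atTop,
      f n / (n : ℝ) ^ ((1:ℝ)/((d:ℝ)+1)) ≤ C := by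
  classical
  obtain ⟨R, hR, hd⟩ := hdense
  refine ⟨2*R+1, ?_⟩
  rw [eventually_atTop]
  refine ⟨1, fun N hN => ?_⟩
  set p : ℝ := (1:ℝ)/((d:ℝ)+1) with hp
  have hdpos : (0:ℝ) < (d:ℝ) + 1 := by positivity
  have hppos : 0 < p := by positivity
  have hN1 : (1:ℝ) ≤ (N:ℝ) := by exact_mod_cast hN
  have hNp : (1:ℝ) ≤ (N:ℝ) ^ p := Real.one_le_rpow hN1 hppos.le
  have hNppos : (0:ℝ) < (N:ℝ) ^ p := lt_of_lt_of_le one_pos hNp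
  have hfN : 0 ≤ f N := hf0 N (by positivity)
  have key : f N ≤ R * (N:ℝ) ^ p + (R+1) := by
    rcases lt_or_ge (f N - R - 1) 0 with hcase | hcase
    · nlinarith [mul_nonneg hR.le (le_trans zero_le_one hNp)]
    · set r : ℝ := f N - R - 1 with hr
      -- the closed ball of radius r is covered by the N balls of radius R
      have hcover : Metric.closedBall (0 : EuclideanSpace ℝ (Fin (d+1))) r ⊆
          ⋃ n ∈ Finset.range N, Metric.closedBall (f n • u n) R := by
        intro x hx
        obtain ⟨n, hn1, hnx⟩ := hd x
        have hxr : ‖x‖ ≤ r := by simpa using hx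
        have hfn0 : 0 ≤ f n := hf0 n (by positivity)
        have hnorm : ‖f n • u n‖ = f n := by
          rw [norm_smul, hu n, mul_one, Real.norm_eq_abs, abs_of_nonneg hfn0]
        have hfn : f n ≤ ‖x‖ + R := by
          calc f n = ‖f n • u n‖ := hnorm.symm
            _ ≤ ‖x‖ + ‖x - f n • u n‖ := by
                have h := norm_sub_le x (x - f n • u n)
                rwa [sub_sub_cancel] at h
            _ ≤ ‖x‖ + R := by linarith
        have hfnN : f n < f N := by
          have : f n ≤ r + R := le_trans hfn (by linarith)
          rw [hr] at this; linarith
        have hnN : n < N := by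
          by_contra h
          push_neg at h
          have : f N ≤ f n := hf (Set.mem_Ici.2 (by positivity))
            (Set.mem_Ici.2 (by positivity)) (by exact_mod_cast h)
          linarith
        refine Set.mem_biUnion (Finset.mem_range.2 hnN) ?_
        rw [Metric.mem_closedBall, dist_eq_norm]
        exact hnx
      -- volume comparison
      have hvol : MeasureTheory.volume
            (Metric.closedBall (0 : EuclideanSpace ℝ (Fin (d+1))) r)
          ≤ ∑ n ∈ Finset.range N, MeasureTheory.volume
            (Metric.closedBall (f n • u n) R) :=
        le_trans (MeasureTheory.measure_mono hcover)
          (MeasureTheory.measure_biUnion_finset_le _ _)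
      set V := MeasureTheory.volume (Metric.ball (0 : EuclideanSpace ℝ (Fin (d+1))) 1) with hV
      have hballs : ∀ (c : EuclideanSpace ℝ (Fin (d+1))) (s : ℝ), 0 ≤ s →
          MeasureTheory.volume (Metric.closedBall c s)
            = ENNReal.ofReal (s ^ (d+1)) * V := by
        intro c s hs
        rw [MeasureTheory.Measure.addHaar_closedBall _ c hs]
        congr 2
        simp [finrank_euclideanSpace]
      rw [hballs 0 r hcase] at hvol
      have hsum : (∑ n ∈ Finset.range N, MeasureTheory.volume
            (Metric.closedBall (f n • u n) R))
          = (N : ENNReal) * (ENNReal.ofReal (R ^ (d+1)) * V) := by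
        rw [Finset.sum_congr rfl fun n _ => hballs _ R hR.le]
        simp [Finset.sum_const, mul_comm, nsmul_eq_mul]
      rw [hsum] at hvol
      have hV0 : V ≠ 0 := (Metric.measure_ball_pos _ _ one_pos).ne'
      have hVtop : V ≠ ⊤ := MeasureTheory.measure_ball_lt_top.ne
      have hvol2 : ENNReal.ofReal (r ^ (d+1))
          ≤ (N : ENNReal) * ENNReal.ofReal (R ^ (d+1)) := by
        rw [← ENNReal.mul_le_mul_iff_left hV0 hVtop]
        calc ENNReal.ofReal (r ^ (d+1)) * V
            ≤ (N : ENNReal) * (ENNReal.ofReal (R ^ (d+1)) * V) := hvol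
          _ = (N : ENNReal) * ENNReal.ofReal (R ^ (d+1)) * V := by ring
      have hreal : r ^ (d+1) ≤ (N:ℝ) * R ^ (d+1) := by
        have : ENNReal.ofReal (r ^ (d+1)) ≤ ENNReal.ofReal ((N:ℝ) * R ^ (d+1)) := by
          rw [ENNReal.ofReal_mul (by positivity), ENNReal.ofReal_natCast]
          exact hvol2
        exact (ENNReal.ofReal_le_ofReal_iff (by positivity)).1 this
      -- take (d+1)-th roots
      have hroot : r ≤ (N:ℝ) ^ p * R := by
        have h1 : (r ^ (d+1) : ℝ) ^ p ≤ ((N:ℝ) * R ^ (d+1)) ^ p :=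
          Real.rpow_le_rpow (by positivity) hreal hppos.le
        have h2 : (r ^ (d+1) : ℝ) ^ p = r := by
          rw [← Real.rpow_natCast r (d+1), ← Real.rpow_mul hcase]
          have : ((d+1 : ℕ) : ℝ) * p = 1 := by
            rw [hp]; push_cast; field_simp
          rw [this, Real.rpow_one]
        have h3 : ((N:ℝ) * R ^ (d+1)) ^ p = (N:ℝ) ^ p * R := by
          rw [Real.mul_rpow (by positivity) (by positivity)]
          congr 1
          rw [← Real.rpow_natCast R (d+1), ← Real.rpow_mul hR.le]
          have : ((d+1 : ℕ) : ℝ) * p = 1 := by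
            rw [hp]; push_cast; field_simp
          rw [this, Real.rpow_one]
        rw [h2, h3] at h1
        exact h1
      have : f N = r + R + 1 := by rw [hr]; ring
      rw [this]
      nlinarith [hroot]
  rw [div_le_iff₀ hNppos]
  nlinarith [mul_le_mul_of_nonneg_left hNp hR.le]
end
end
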